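/- arXiv:2309.12567 — 3 statements merged into one kernel-verified Lean document; each statement's English description precedes it below -/
import Mathlib

section
/- Let 1 < p < Q where Q = m + 2k, let R > 0, and define f(z,σ) = ( R / N(z,σ) )^{(Q−p)/(p−1)} for (z,σ) ≠ (0,0), where N(z,σ) = (|z|⁴ + 16|σ|²)^{1/4}. Then at every point (z,σ) with z ≠ 0 one has Δ_{H,p} f(z,σ) = 0; moreover f = 1 on the gauge sphere {N = R}. -/
open scoped BigOperators
open Matrix

noncomputable section

variable {m k : ℕ}

/-- The ambient point space ℝ^m × ℝ^k. -/
abbrev Pt (m k : ℕ) := EuclideanSpace ℝ (Fin m) × EuclideanSpace ℝ (Fin k)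

/-- H-type (Clifford) condition on the matrices J_ℓ : skew-symmetry and
    J_ℓ J_{ℓ'} + J_{ℓ'} J_ℓ = -2 δ_{ℓℓ'} Id. -/
def HType (J : Fin k → Matrix (Fin m) (Fin m) ℝ) : Prop :=
  (∀ ℓ, (J ℓ)ᵀ = -(J ℓ)) ∧
  ∀ ℓ ℓ', J ℓ * J ℓ' + J ℓ' * J ℓ =
    (if ℓ = ℓ' then (-2 : ℝ) else 0) • (1 : Matrix (Fin m) (Fin m) ℝ)

/-- Horizontal derivative X_i f(z,σ) = ∂_{z_i} f + (1/2) Σ_ℓ (J_ℓ z)_i ∂_{σ_ℓ} f. -/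
def XD (J : Fin k → Matrix (Fin m) (Fin m) ℝ) (f : Pt m k → ℝ) (i : Fin m) (x : Pt m k) : ℝ :=
  fderiv ℝ f x (EuclideanSpace.single i 1, 0)
    + (1/2) * ∑ ℓ : Fin k, (∑ j : Fin m, J ℓ i j * x.1 j) *
        fderiv ℝ f x (0, EuclideanSpace.single ℓ 1)

/-- Squared length of the horizontal gradient. -/
def hGradSq (J : Fin k → Matrix (Fin m) (Fin m) ℝ) (f : Pt m k → ℝ) (x : Pt m k) : ℝ :=
  ∑ i : Fin m, (XD J f i x) ^ 2

/-- Length of the horizontal gradient. -/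
def hGradNorm (J : Fin k → Matrix (Fin m) (Fin m) ℝ) (f : Pt m k → ℝ) (x : Pt m k) : ℝ :=
  Real.sqrt (hGradSq J f x)

/-- Horizontal Laplacian Δ_H f = Σ X_i(X_i f). -/
def hLap (J : Fin k → Matrix (Fin m) (Fin m) ℝ) (f : Pt m k → ℝ) (x : Pt m k) : ℝ :=
  ∑ i : Fin m, XD J (XD J f i) i x

/-- Horizontal ∞-Laplacian Δ_{H,∞} f = (1/2) Σ X_i(|∇_H f|²) X_i f. -/
def hInfLap (J : Fin k → Matrix (Fin m) (Fin m) ℝ) (f : Pt m k → ℝ) (x : Pt m k) : ℝ :=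
  (1/2) * ∑ i : Fin m, XD J (hGradSq J f) i x * XD J f i x

/-- Horizontal p-Laplacian Δ_{H,p} f = Σ X_i(|∇_H f|^{p-2} X_i f). -/
def hPLap (J : Fin k → Matrix (Fin m) (Fin m) ℝ) (p : ℝ) (f : Pt m k → ℝ) (x : Pt m k) : ℝ :=
  ∑ i : Fin m, XD J (fun y => (hGradSq J f y) ^ ((p - 2) / 2) * XD J f i y) i x

/-- Korányi gauge N(z,σ) = (|z|⁴ + 16|σ|²)^{1/4}. -/
def gaugeN (x : Pt m k) : ℝ := (‖x.1‖ ^ 4 + 16 * ‖x.2‖ ^ 2) ^ ((1 : ℝ)/4)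

/-- ∂_ξ g for g : ℝ × ℝ^k → ℝ. -/
def gXi (g : ℝ × EuclideanSpace ℝ (Fin k) → ℝ) (y : ℝ × EuclideanSpace ℝ (Fin k)) : ℝ :=
  fderiv ℝ g y (1, 0)

/-- ∂_{σ_ℓ} g for g : ℝ × ℝ^k → ℝ. -/
def gS (g : ℝ × EuclideanSpace ℝ (Fin k) → ℝ) (ℓ : Fin k) (y : ℝ × EuclideanSpace ℝ (Fin k)) : ℝ :=
  fderiv ℝ g y (0, EuclideanSpace.single ℓ 1)

/-- |∇ g|² = g_ξ² + |∇_σ g|². -/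
def gGradSq (g : ℝ × EuclideanSpace ℝ (Fin k) → ℝ) (y : ℝ × EuclideanSpace ℝ (Fin k)) : ℝ :=
  (gXi g y) ^ 2 + ∑ ℓ : Fin k, (gS g ℓ y) ^ 2

/-- g_{ξξ}. -/
def gXiXi (g : ℝ × EuclideanSpace ℝ (Fin k) → ℝ) (y : ℝ × EuclideanSpace ℝ (Fin k)) : ℝ :=
  fderiv ℝ (gXi g) y (1, 0)

/-- Δ_σ g. -/
def gLapS (g : ℝ × EuclideanSpace ℝ (Fin k) → ℝ) (y : ℝ × EuclideanSpace ℝ (Fin k)) : ℝ :=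
  ∑ ℓ : Fin k, fderiv ℝ (gS g ℓ) y (0, EuclideanSpace.single ℓ 1)

/-- Euclidean ∞-Laplacian Δ_∞ g = (1/2)⟨∇(|∇g|²), ∇g⟩ on ℝ × ℝ^k. -/
def gInf (g : ℝ × EuclideanSpace ℝ (Fin k) → ℝ) (y : ℝ × EuclideanSpace ℝ (Fin k)) : ℝ :=
  (1/2) * (fderiv ℝ (gGradSq g) y (1, 0) * gXi g y
    + ∑ ℓ : Fin k, fderiv ℝ (gGradSq g) y (0, EuclideanSpace.single ℓ 1) * gS g ℓ y)



namespace CapAux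
open scoped RealInnerProductSpace

variable {m k : ℕ}

/-! ### Algebraic identities from the H-type relations -/

lemma skew_dot (A : Matrix (Fin m) (Fin m) ℝ) (hA : Aᵀ = -A) (z : Fin m → ℝ) :
    z ⬝ᵥ (A *ᵥ z) = 0 := by
  have h1 : z ⬝ᵥ (A *ᵥ z) = (Aᵀ *ᵥ z) ⬝ᵥ z := by
    rw [Matrix.dotProduct_mulVec, ← Matrix.mulVec_transpose]
  rw [hA] at h1
  have h2 : ((-A) *ᵥ z) ⬝ᵥ z = -(z ⬝ᵥ (A *ᵥ z)) := by
    rw [Matrix.neg_mulVec, neg_dotProduct, dotProduct_comm]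
  linarith [h1, h2.symm ▸ h1]

lemma Jdot (J : Fin k → Matrix (Fin m) (Fin m) ℝ) (hJ : HType J)
    (ℓ ℓ' : Fin k) (z : Fin m → ℝ) :
    (J ℓ *ᵥ z) ⬝ᵥ (J ℓ' *ᵥ z) = (if ℓ = ℓ' then (1:ℝ) else 0) * (z ⬝ᵥ z) := by
  obtain ⟨hskew, hrel⟩ := hJ
  have e1 : (J ℓ *ᵥ z) ⬝ᵥ (J ℓ' *ᵥ z) = -(((J ℓ' * J ℓ) *ᵥ z) ⬝ᵥ z) := by
    rw [Matrix.dotProduct_mulVec, ← Matrix.mulVec_transpose, hskew ℓ',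
      Matrix.neg_mulVec, neg_dotProduct, Matrix.mulVec_mulVec]
  have e2 : (J ℓ' *ᵥ z) ⬝ᵥ (J ℓ *ᵥ z) = -(((J ℓ * J ℓ') *ᵥ z) ⬝ᵥ z) := by
    rw [Matrix.dotProduct_mulVec, ← Matrix.mulVec_transpose, hskew ℓ,
      Matrix.neg_mulVec, neg_dotProduct, Matrix.mulVec_mulVec]
  have ecomm : (J ℓ' *ᵥ z) ⬝ᵥ (J ℓ *ᵥ z) = (J ℓ *ᵥ z) ⬝ᵥ (J ℓ' *ᵥ z) :=
    dotProduct_comm _ _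
  have esum : (((J ℓ * J ℓ' + J ℓ' * J ℓ) *ᵥ z) ⬝ᵥ z)
      = (if ℓ = ℓ' then (-2:ℝ) else 0) * (z ⬝ᵥ z) := by
    rw [hrel ℓ ℓ', Matrix.smul_mulVec, Matrix.one_mulVec, smul_dotProduct]
    simp [smul_eq_mul]
  rw [Matrix.add_mulVec, add_dotProduct] at esum
  by_cases h : ℓ = ℓ' <;> simp only [h, if_true, if_false] at * <;> linarith

lemma diag_zero (A : Matrix (Fin m) (Fin m) ℝ) (hA : Aᵀ = -A) (i : Fin m) : A i i = 0 := by
  have := congrFun (congrFun hA i) i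
  simp [Matrix.transpose_apply] at this
  linarith

lemma row_bridge (J : Fin k → Matrix (Fin m) (Fin m) ℝ) (ℓ : Fin k) (z : Fin m → ℝ) (i : Fin m) :
    (∑ j, J ℓ i j * z j) = (J ℓ *ᵥ z) i := by
  simp [Matrix.mulVec, dotProduct]

lemma dot_eq (z w : Fin m → ℝ) : z ⬝ᵥ w = ∑ i, z i * w i := rfl

lemma sum_z_P (J : Fin k → Matrix (Fin m) (Fin m) ℝ) (hJ : HType J)
    (z : Fin m → ℝ) (σ : Fin k → ℝ) :
    ∑ i, z i * (∑ ℓ, (∑ j, J ℓ i j * z j) * σ ℓ) = 0 := by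
  have step : ∀ i, z i * (∑ ℓ, (∑ j, J ℓ i j * z j) * σ ℓ)
      = ∑ ℓ, σ ℓ * (z i * (J ℓ *ᵥ z) i) := by
    intro i
    rw [Finset.mul_sum]
    exact Finset.sum_congr rfl fun ℓ _ => by rw [row_bridge]; ring
  rw [Finset.sum_congr rfl fun i _ => step i, Finset.sum_comm]
  refine Finset.sum_eq_zero fun ℓ _ => ?_
  rw [← Finset.mul_sum, ← dot_eq, skew_dot _ (hJ.1 ℓ), mul_zero]

lemma sum_P_sq (J : Fin k → Matrix (Fin m) (Fin m) ℝ) (hJ : HType J)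
    (z : Fin m → ℝ) (σ : Fin k → ℝ) :
    ∑ i, (∑ ℓ, (∑ j, J ℓ i j * z j) * σ ℓ)^2 = (∑ ℓ, σ ℓ^2) * (∑ i, z i^2) := by
  have step : ∀ i, (∑ ℓ, (∑ j, J ℓ i j * z j) * σ ℓ)^2
      = ∑ ℓ, ∑ ℓ', (σ ℓ * σ ℓ') * ((J ℓ *ᵥ z) i * (J ℓ' *ᵥ z) i) := by
    intro i
    rw [sq, Finset.sum_mul_sum]
    exact Finset.sum_congr rfl fun ℓ _ => Finset.sum_congr rfl fun ℓ' _ => by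
      rw [row_bridge, row_bridge]; ring
  rw [Finset.sum_congr rfl fun i _ => step i, Finset.sum_comm]
  have inner : ∀ ℓ, ∑ i, ∑ ℓ', (σ ℓ * σ ℓ') * ((J ℓ *ᵥ z) i * (J ℓ' *ᵥ z) i)
      = σ ℓ ^2 * (z ⬝ᵥ z) := by
    intro ℓ
    rw [Finset.sum_comm]
    have h1 : ∀ ℓ', ∑ i, (σ ℓ * σ ℓ') * ((J ℓ *ᵥ z) i * (J ℓ' *ᵥ z) i)
        = (σ ℓ * σ ℓ') * ((if ℓ = ℓ' then (1:ℝ) else 0) * (z ⬝ᵥ z)) := by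
      intro ℓ'
      rw [← Finset.mul_sum, ← dot_eq, Jdot J hJ]
    rw [Finset.sum_congr rfl fun ℓ' _ => h1 ℓ']
    simp [Finset.sum_ite_eq, sq, mul_assoc]
  rw [Finset.sum_congr rfl fun ℓ _ => inner ℓ, ← Finset.sum_mul, dot_eq]
  refine congrArg _ ?_
  exact Finset.sum_congr rfl fun i _ => by rw [sq]

lemma sum_QQ (J : Fin k → Matrix (Fin m) (Fin m) ℝ) (hJ : HType J) (z : Fin m → ℝ) :
    ∑ i, ∑ ℓ, (∑ j, J ℓ i j * z j)^2 = (k : ℝ) * (∑ i, z i ^2) := by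
  rw [Finset.sum_comm]
  have h1 : ∀ ℓ : Fin k, ∑ i, (∑ j, J ℓ i j * z j)^2 = ∑ i, z i^2 := by
    intro ℓ
    have := Jdot J hJ ℓ ℓ z
    simp only [if_true] at this
    rw [one_mul] at this
    calc ∑ i, (∑ j, J ℓ i j * z j)^2 = (J ℓ *ᵥ z) ⬝ᵥ (J ℓ *ᵥ z) := by
          rw [dot_eq]
          exact Finset.sum_congr rfl fun i _ => by rw [row_bridge, sq]
      _ = z ⬝ᵥ z := this
      _ = ∑ i, z i^2 := by rw [dot_eq]; exact Finset.sum_congr rfl fun i _ => (sq (z i)).symm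
  rw [Finset.sum_congr rfl fun ℓ _ => h1 ℓ, Finset.sum_const, Finset.card_univ]
  simp [mul_comm]

lemma norm_sq_eq {n : ℕ} (x : EuclideanSpace ℝ (Fin n)) : ‖x‖^2 = ∑ i, x i ^2 := by
  rw [EuclideanSpace.norm_eq, Real.sq_sqrt (by positivity)]
  simp [sq_abs]

lemma inner_single {n : ℕ} (v : EuclideanSpace ℝ (Fin n)) (i : Fin n) :
    ⟪v, EuclideanSpace.single i (1:ℝ)⟫ = v i := by
  simp [EuclideanSpace.inner_single_right]

/-! ### The gauge function and its derivatives -/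

def uF (y : Pt m k) : ℝ := ‖y.1‖ ^ 4 + 16 * ‖y.2‖ ^ 2

def VF (J : Fin k → Matrix (Fin m) (Fin m) ℝ) (i : Fin m) (y : Pt m k) : ℝ :=
  4 * ‖y.1‖^2 * y.1 i + 16 * ∑ ℓ, (∑ j, J ℓ i j * y.1 j) * y.2 ℓ

def DuF (x : Pt m k) : Pt m k →L[ℝ] ℝ :=
  (4 * ‖x.1‖^2) • ((innerSL ℝ x.1).comp (ContinuousLinearMap.fst ℝ _ _))
    + (32:ℝ) • ((innerSL ℝ x.2).comp (ContinuousLinearMap.snd ℝ _ _))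

@[simp] lemma DuF_apply (x h : Pt m k) :
    DuF x h = 4 * ‖x.1‖^2 * ⟪x.1, h.1⟫ + 32 * ⟪x.2, h.2⟫ := by
  simp [DuF]

lemma hasFDerivAt_uF (x : Pt m k) : HasFDerivAt uF (DuF x) x := by
  have h1 : HasFDerivAt (fun y : Pt m k => ‖y.1‖^2)
      (2 • (innerSL ℝ x.1).comp (ContinuousLinearMap.fst ℝ _ _)) x :=
    (hasFDerivAt_fst (𝕜 := ℝ)).norm_sq
  have h2 := h1.fun_mul h1
  have h3 := ((hasFDerivAt_snd (𝕜 := ℝ) (p := x)).norm_sq).const_mul (16:ℝ)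
  have h4 := h2.fun_add h3
  have heq : uF = fun y : Pt m k => ‖y.1‖^2 * ‖y.1‖^2 + 16 * ‖y.2‖^2 := by
    funext y; simp [uF]; ring
  rw [heq]
  refine h4.congr_fderiv ?_
  ext h <;> simp <;> ring

lemma uF_pos {x : Pt m k} (hx : x.1 ≠ 0) : 0 < uF x := by
  have h1 : 0 < ‖x.1‖ := norm_pos_iff.mpr hx
  have h2 : 0 < ‖x.1‖^4 := by positivity
  have h3 : 0 ≤ ‖x.2‖^2 := by positivity
  simp only [uF]; nlinarith

lemma hasFDerivAt_cupow (c b : ℝ) {x : Pt m k} (hx : x.1 ≠ 0) :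
    HasFDerivAt (fun y : Pt m k => c * uF y ^ b) ((c * (b * uF x ^ (b-1))) • DuF x) x := by
  have h := ((hasFDerivAt_uF x).rpow_const (p := b) (Or.inl (uF_pos hx).ne')).const_mul c
  rwa [smul_smul] at h

lemma gaugeN_eq (y : Pt m k) : gaugeN y = uF y ^ ((1:ℝ)/4) := rfl

lemma f_eq (R α : ℝ) (hR : 0 < R) {y : Pt m k} (hy : y.1 ≠ 0) :
    (R / gaugeN y) ^ α = R ^ α * uF y ^ (-(1/4*α)) := by
  have hu := uF_pos hy
  rw [gaugeN_eq, Real.div_rpow hR.le (Real.rpow_nonneg hu.le _),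
    ← Real.rpow_mul hu.le, Real.rpow_neg hu.le, div_eq_mul_inv]

lemma isOpen_U : IsOpen {y : Pt m k | y.1 ≠ 0} :=
  IsOpen.preimage continuous_fst isOpen_compl_singleton

lemma hasFDerivAt_fE (R α : ℝ) (hR : 0 < R) {x : Pt m k} (hx : x.1 ≠ 0) :
    HasFDerivAt (fun y : Pt m k => (R / gaugeN y)^α)
      ((R^α * ((-(1/4*α)) * uF x ^ (-(1/4*α)-1))) • DuF x) x := by
  have hev : (fun y : Pt m k => (R / gaugeN y)^α)
      =ᶠ[nhds x] (fun y => R^α * uF y ^ (-(1/4*α))) :=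
    Filter.eventuallyEq_of_mem (isOpen_U.mem_nhds hx) (fun y hy => f_eq R α hR hy)
  exact (hasFDerivAt_cupow (R^α) (-(1/4*α)) hx).congr_of_eventuallyEq hev

lemma XD_fE (J : Fin k → Matrix (Fin m) (Fin m) ℝ) (R α : ℝ) (hR : 0 < R)
    {x : Pt m k} (hx : x.1 ≠ 0) (i : Fin m) :
    XD J (fun y => (R / gaugeN y)^α) i x
      = (R^α * ((-(1/4*α)) * uF x ^ (-(1/4*α)-1))) * VF J i x := by
  rw [XD, (hasFDerivAt_fE R α hR hx).fderiv]
  set C := R^α * ((-(1/4*α)) * uF x ^ (-(1/4*α)-1)) with hC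
  simp only [ContinuousLinearMap.smul_apply, DuF_apply, smul_eq_mul, inner_single,
    inner_zero_right, mul_zero, add_zero, zero_add, mul_one]
  have hs : ∑ ℓ, (∑ j, J ℓ i j * x.1 j) * (C * (32 * x.2 ℓ))
      = 32 * C * ∑ ℓ, (∑ j, J ℓ i j * x.1 j) * x.2 ℓ := by
    rw [Finset.mul_sum]; exact Finset.sum_congr rfl fun ℓ _ => by ring
  rw [hs, VF]; ring

lemma sumVsq (J : Fin k → Matrix (Fin m) (Fin m) ℝ) (hJ : HType J) (x : Pt m k) :
    ∑ i, (VF J i x)^2 = 16 * ‖x.1‖^2 * uF x := by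
  have step : ∀ i, (VF J i x)^2 = 16*(‖x.1‖^2)^2*(x.1 i)^2
      + 128*‖x.1‖^2*(x.1 i * (∑ ℓ, (∑ j, J ℓ i j * x.1 j) * x.2 ℓ))
      + 256*(∑ ℓ, (∑ j, J ℓ i j * x.1 j) * x.2 ℓ)^2 := fun i => by rw [VF]; ring
  rw [Finset.sum_congr rfl fun i _ => step i, Finset.sum_add_distrib, Finset.sum_add_distrib,
    ← Finset.mul_sum, ← Finset.mul_sum, ← Finset.mul_sum,
    sum_z_P J hJ, sum_P_sq J hJ, ← norm_sq_eq, ← norm_sq_eq, uF]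
  ring

lemma sum_zV (J : Fin k → Matrix (Fin m) (Fin m) ℝ) (hJ : HType J) (x : Pt m k) :
    ∑ i, x.1 i * VF J i x = 4 * (‖x.1‖^2)^2 := by
  have step : ∀ i, x.1 i * VF J i x = 4*‖x.1‖^2*(x.1 i)^2
      + 16*(x.1 i * (∑ ℓ, (∑ j, J ℓ i j * x.1 j) * x.2 ℓ)) := fun i => by rw [VF]; ring
  rw [Finset.sum_congr rfl fun i _ => step i, Finset.sum_add_distrib,
    ← Finset.mul_sum, ← Finset.mul_sum, sum_z_P J hJ, ← norm_sq_eq]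
  ring

lemma sum_PV (J : Fin k → Matrix (Fin m) (Fin m) ℝ) (hJ : HType J) (x : Pt m k) :
    ∑ i, (∑ ℓ, (∑ j, J ℓ i j * x.1 j) * x.2 ℓ) * VF J i x = 16 * ‖x.2‖^2 * ‖x.1‖^2 := by
  have step : ∀ i, (∑ ℓ, (∑ j, J ℓ i j * x.1 j) * x.2 ℓ) * VF J i x
      = 4*‖x.1‖^2*(x.1 i * (∑ ℓ, (∑ j, J ℓ i j * x.1 j) * x.2 ℓ))
      + 16*(∑ ℓ, (∑ j, J ℓ i j * x.1 j) * x.2 ℓ)^2 := fun i => by rw [VF]; ring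
  rw [Finset.sum_congr rfl fun i _ => step i, Finset.sum_add_distrib,
    ← Finset.mul_sum, ← Finset.mul_sum, sum_z_P J hJ, sum_P_sq J hJ,
    ← norm_sq_eq, ← norm_sq_eq]
  ring

lemma hGradSq_fE (J : Fin k → Matrix (Fin m) (Fin m) ℝ) (hJ : HType J) (R α : ℝ) (hR : 0 < R)
    {x : Pt m k} (hx : x.1 ≠ 0) :
    hGradSq J (fun y => (R / gaugeN y)^α) x
      = (16 * (1/4*α)^2 * (R^α)^2) * (‖x.1‖^2 * uF x ^ (-2*(1/4*α)-1)) := by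
  have hu := uF_pos hx
  rw [hGradSq, Finset.sum_congr rfl fun i _ => by rw [XD_fE J R α hR hx i, mul_pow],
    ← Finset.mul_sum, sumVsq J hJ x]
  have key : (uF x ^ (-(1/4*α)-1))^2 * uF x = uF x ^ (-2*(1/4*α)-1) := by
    rw [sq, ← Real.rpow_add hu, ← Real.rpow_add_one hu.ne']
    congr 1; ring
  calc (R^α * (-(1/4*α) * uF x ^ (-(1/4*α)-1)))^2 * (16 * ‖x.1‖^2 * uF x)
      = (16 * (1/4*α)^2 * (R^α)^2) * (‖x.1‖^2 * ((uF x ^ (-(1/4*α)-1))^2 * uF x)) := by ring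
    _ = (16 * (1/4*α)^2 * (R^α)^2) * (‖x.1‖^2 * uF x ^ (-2*(1/4*α)-1)) := by rw [key]

def coordZ (i : Fin m) : Pt m k →L[ℝ] ℝ :=
  (EuclideanSpace.proj i).comp (ContinuousLinearMap.fst ℝ _ _)

def coordS (ℓ : Fin k) : Pt m k →L[ℝ] ℝ :=
  (EuclideanSpace.proj ℓ).comp (ContinuousLinearMap.snd ℝ _ _)

@[simp] lemma coordZ_apply (i : Fin m) (h : Pt m k) : coordZ i h = h.1 i := rfl
@[simp] lemma coordS_apply (ℓ : Fin k) (h : Pt m k) : coordS ℓ h = h.2 ℓ := rfl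

lemma hasFDerivAt_coordZ (i : Fin m) (x : Pt m k) :
    HasFDerivAt (fun y : Pt m k => y.1 i) (coordZ (k := k) i) x := by
  exact (coordZ (k := k) i).hasFDerivAt

lemma hasFDerivAt_coordS (ℓ : Fin k) (x : Pt m k) :
    HasFDerivAt (fun y : Pt m k => y.2 ℓ) (coordS (m := m) ℓ) x := by
  exact (coordS (m := m) ℓ).hasFDerivAt

lemma G_app (J : Fin k → Matrix (Fin m) (Fin m) ℝ) (KK q e : ℝ)
    {x : Pt m k} (hx : x.1 ≠ 0) (i : Fin m) (v : Pt m k) :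
    fderiv ℝ (fun y : Pt m k => KK * ((‖y.1‖^2)^q * (uF y ^ e * VF J i y))) x v
      = KK * ( (q*(‖x.1‖^2)^(q-1)*(2*⟪x.1,v.1⟫)) * (uF x^e * VF J i x)
        + (‖x.1‖^2)^q * ( (e*uF x^(e-1)*(4*‖x.1‖^2*⟪x.1,v.1⟫+32*⟪x.2,v.2⟫)) * VF J i x
          + uF x^e * (8*⟪x.1,v.1⟫*(x.1 i) + 4*‖x.1‖^2*(v.1 i)
            + 16*∑ ℓ, (∑ j, J ℓ i j * v.1 j)*(x.2 ℓ)
            + 16*∑ ℓ, (∑ j, J ℓ i j * x.1 j)*(v.2 ℓ)) ) ) := by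
  have hwpos : (0:ℝ) < ‖x.1‖^2 := by
    have := norm_pos_iff.mpr hx
    positivity
  have hw2 : HasFDerivAt (fun y : Pt m k => ‖y.1‖^2)
      (2 • (innerSL ℝ x.1).comp (ContinuousLinearMap.fst ℝ _ _)) x :=
    (hasFDerivAt_fst (𝕜 := ℝ)).norm_sq
  have hwq := hw2.rpow_const (p := q) (Or.inl hwpos.ne')
  have hue := (hasFDerivAt_uF x).rpow_const (p := e) (Or.inl (uF_pos hx).ne')
  have hterm1 := (hw2.const_mul (4:ℝ)).fun_mul (hasFDerivAt_coordZ i x)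
  have hrow : ∀ ℓ, HasFDerivAt (fun y : Pt m k => ∑ j, J ℓ i j * y.1 j)
      (∑ j, (J ℓ i j) • coordZ (k := k) j) x :=
    fun ℓ => HasFDerivAt.fun_sum (fun j _ => (hasFDerivAt_coordZ j x).const_mul (J ℓ i j))
  have hterm2 := HasFDerivAt.fun_sum
    (fun ℓ (_ : ℓ ∈ Finset.univ) => (hrow ℓ).fun_mul (hasFDerivAt_coordS ℓ x))
  have hVi := hterm1.fun_add (hterm2.const_mul (16:ℝ))
  have hG := ((hwq.fun_mul (hue.fun_mul hVi)).const_mul KK).fderiv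
  simp only [VF]
  rw [hG]
  simp only [ContinuousLinearMap.smul_apply, ContinuousLinearMap.add_apply,
    ContinuousLinearMap.sum_apply, ContinuousLinearMap.comp_apply,
    ContinuousLinearMap.coe_fst', ContinuousLinearMap.coe_snd',
    innerSL_apply_apply, coordZ_apply, coordS_apply, smul_eq_mul, nsmul_eq_mul,
    Nat.cast_ofNat, DuF_apply, Finset.sum_add_distrib]
  have hc : ∑ ℓ, x.2 ℓ * (∑ j, J ℓ i j * v.1 j) = ∑ ℓ, (∑ j, J ℓ i j * v.1 j) * x.2 ℓ :=
    Finset.sum_congr rfl fun ℓ _ => mul_comm _ _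
  rw [hc]
  ring

lemma inner_eq (J : Fin k → Matrix (Fin m) (Fin m) ℝ) (hJ : HType J) (R α q : ℝ) (hR : 0 < R)
    {y : Pt m k} (hy : y.1 ≠ 0) (i : Fin m) :
    (hGradSq J (fun y' => (R / gaugeN y')^α) y)^q * XD J (fun y' => (R / gaugeN y')^α) i y
      = ((16*(1/4*α)^2*(R^α)^2)^q * (R^α * (-(1/4*α))))
        * ((‖y.1‖^2)^q * (uF y ^ ((-2*(1/4*α)-1)*q + (-(1/4*α)-1)) * VF J i y)) := by
  have hu := uF_pos hy
  have hwpos : (0:ℝ) < ‖y.1‖^2 := by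
    have := norm_pos_iff.mpr hy
    positivity
  have hA : (0:ℝ) ≤ 16*(1/4*α)^2*(R^α)^2 := by positivity
  rw [hGradSq_fE J hJ R α hR hy, XD_fE J R α hR hy i,
    Real.mul_rpow hA (by positivity),
    Real.mul_rpow hwpos.le (Real.rpow_nonneg hu.le _),
    ← Real.rpow_mul hu.le,
    Real.rpow_add hu]
  ring

lemma XDG (J : Fin k → Matrix (Fin m) (Fin m) ℝ) (hJ : HType J) (R α q : ℝ) (hR : 0 < R)
    {x : Pt m k} (hx : x.1 ≠ 0) (i : Fin m) :
    XD J (fun y => (hGradSq J (fun y' => (R / gaugeN y')^α) y)^q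
        * XD J (fun y' => (R / gaugeN y')^α) i y) i x
      = ((16*(1/4*α)^2*(R^α)^2)^q * (R^α * (-(1/4*α))))
        * ( 2*q*(‖x.1‖^2)^(q-1)*(uF x^((-2*(1/4*α)-1)*q + (-(1/4*α)-1)))*(x.1 i)*(VF J i x)
          + 4*((-2*(1/4*α)-1)*q + (-(1/4*α)-1))*(‖x.1‖^2)^q
              *(uF x^(((-2*(1/4*α)-1)*q + (-(1/4*α)-1))-1))*(‖x.1‖^2)*(x.1 i)*(VF J i x)
          + (‖x.1‖^2)^q*(uF x^((-2*(1/4*α)-1)*q + (-(1/4*α)-1)))*(8*(x.1 i)^2 + 4*‖x.1‖^2)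
          + 16*((-2*(1/4*α)-1)*q + (-(1/4*α)-1))*(‖x.1‖^2)^q
              *(uF x^(((-2*(1/4*α)-1)*q + (-(1/4*α)-1))-1))
              *(∑ ℓ, (∑ j, J ℓ i j * x.1 j)*x.2 ℓ)*(VF J i x)
          + 8*(‖x.1‖^2)^q*(uF x^((-2*(1/4*α)-1)*q + (-(1/4*α)-1)))
              *(∑ ℓ, (∑ j, J ℓ i j * x.1 j)^2) ) := by
  set KK := (16*(1/4*α)^2*(R^α)^2)^q * (R^α * (-(1/4*α))) with hKK
  set e := (-2*(1/4*α)-1)*q + (-(1/4*α)-1) with he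
  have hfd : fderiv ℝ (fun y => (hGradSq J (fun y' => (R / gaugeN y')^α) y)^q
        * XD J (fun y' => (R / gaugeN y')^α) i y) x
      = fderiv ℝ (fun y : Pt m k => KK * ((‖y.1‖^2)^q * (uF y ^ e * VF J i y))) x :=
    Filter.EventuallyEq.fderiv_eq (Filter.eventuallyEq_of_mem (isOpen_U.mem_nhds hx)
      (fun y hy => inner_eq J hJ R α q hR hy i))
  rw [XD, hfd]
  simp only [G_app J KK q e hx i]
  have hdiag : ∀ ℓ, (∑ j, J ℓ i j * (EuclideanSpace.single i (1:ℝ)) j) = 0 := by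
    intro ℓ
    have h0 : ∀ j, J ℓ i j * (EuclideanSpace.single i (1:ℝ)) j
        = if j = i then J ℓ i i else 0 := by
      intro j
      by_cases hji : j = i <;> simp [EuclideanSpace.single_apply, hji]
    rw [Finset.sum_congr rfl fun j _ => h0 j, Finset.sum_ite_eq' Finset.univ i _]
    simp [diag_zero _ (hJ.1 ℓ) i]
  have hsel : ∀ ℓ : Fin k, ∑ ℓ' : Fin k, (∑ j, J ℓ' i j * x.1 j) * (EuclideanSpace.single ℓ (1:ℝ)) ℓ'
      = ∑ j, J ℓ i j * x.1 j := by
    intro ℓ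
    have h0 : ∀ ℓ' : Fin k, (∑ j, J ℓ' i j * x.1 j) * (EuclideanSpace.single ℓ (1:ℝ)) ℓ'
        = if ℓ' = ℓ then (∑ j, J ℓ i j * x.1 j) else 0 := by
      intro ℓ'
      by_cases hl : ℓ' = ℓ <;> simp [EuclideanSpace.single_apply, hl]
    rw [Finset.sum_congr rfl fun ℓ' _ => h0 ℓ', Finset.sum_ite_eq' Finset.univ ℓ _]
    simp
  simp only [inner_zero_right, inner_single, hdiag, hsel, mul_zero, zero_mul, add_zero,
    zero_add, mul_one, Finset.sum_const_zero]
  have hsing : EuclideanSpace.single i (1:ℝ) i = 1 := by simp [EuclideanSpace.single_apply]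
  simp only [hsing, PiLp.zero_apply, mul_zero, zero_mul, add_zero, zero_add,
    Finset.sum_const_zero, mul_one]
  have hre : ∀ ℓ : Fin k, (∑ j, J ℓ i j * x.1 j) * (KK * ((‖x.1‖^2)^q
        * (e * uF x ^ (e-1) * (32 * x.2 ℓ) * VF J i x + uF x ^ e * (16 * (∑ j, J ℓ i j * x.1 j)))))
      = (32*KK*(‖x.1‖^2)^q*e*uF x^(e-1)*VF J i x) * ((∑ j, J ℓ i j * x.1 j) * x.2 ℓ)
        + (16*KK*(‖x.1‖^2)^q*uF x^e) * ((∑ j, J ℓ i j * x.1 j)^2) := fun ℓ => by ring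
  rw [Finset.sum_congr rfl fun ℓ _ => hre ℓ, Finset.sum_add_distrib,
    ← Finset.mul_sum, ← Finset.mul_sum]
  ring

lemma hPLap_fE_zero (J : Fin k → Matrix (Fin m) (Fin m) ℝ) (hJ : HType J) (p R : ℝ)
    (hp : 1 < p) (hR : 0 < R) {x : Pt m k} (hx : x.1 ≠ 0) :
    hPLap J p (fun y => (R / gaugeN y) ^ (((m:ℝ) + 2*k - p)/(p-1))) x = 0 := by
  have hwne : (‖x.1‖^2 : ℝ) ≠ 0 := by
    have := norm_pos_iff.mpr hx
    positivity
  have hune : uF x ≠ 0 := (uF_pos hx).ne'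
  set α := ((m:ℝ) + 2*k - p)/(p-1) with hα
  rw [hPLap, Finset.sum_congr rfl fun i _ => XDG J hJ R α ((p-2)/2) hR hx i]
  set q := (p-2)/2 with hq
  set e := (-2*(1/4*α)-1)*q + (-(1/4*α)-1) with he
  set KK := (16*(1/4*α)^2*(R^α)^2)^q * (R^α * (-(1/4*α))) with hKK
  have expand : ∀ i : Fin m,
      KK * ( 2*q*(‖x.1‖^2)^(q-1)*(uF x^e)*(x.1 i)*(VF J i x)
        + 4*e*(‖x.1‖^2)^q*(uF x^(e-1))*(‖x.1‖^2)*(x.1 i)*(VF J i x)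
        + (‖x.1‖^2)^q*(uF x^e)*(8*(x.1 i)^2 + 4*‖x.1‖^2)
        + 16*e*(‖x.1‖^2)^q*(uF x^(e-1))*(∑ ℓ, (∑ j, J ℓ i j * x.1 j)*x.2 ℓ)*(VF J i x)
        + 8*(‖x.1‖^2)^q*(uF x^e)*(∑ ℓ, (∑ j, J ℓ i j * x.1 j)^2) )
      = (KK*(2*q*(‖x.1‖^2)^(q-1)*(uF x^e) + 4*e*(‖x.1‖^2)^q*(uF x^(e-1))*(‖x.1‖^2)))
          * (x.1 i * VF J i x)
        + (8*KK*(‖x.1‖^2)^q*(uF x^e)) * ((x.1 i)^2)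
        + (4*KK*(‖x.1‖^2)^q*(uF x^e)*(‖x.1‖^2))
        + (16*KK*e*(‖x.1‖^2)^q*(uF x^(e-1)))
            * ((∑ ℓ, (∑ j, J ℓ i j * x.1 j)*x.2 ℓ) * VF J i x)
        + (8*KK*(‖x.1‖^2)^q*(uF x^e)) * (∑ ℓ, (∑ j, J ℓ i j * x.1 j)^2) := by
    intro i; ring
  rw [Finset.sum_congr rfl fun i _ => expand i]
  rw [Finset.sum_add_distrib, Finset.sum_add_distrib, Finset.sum_add_distrib,
    Finset.sum_add_distrib, ← Finset.mul_sum, ← Finset.mul_sum, ← Finset.mul_sum,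
    ← Finset.mul_sum, ← Finset.mul_sum, Finset.sum_const, Finset.card_univ,
    Fintype.card_fin, nsmul_eq_mul]
  rw [sum_zV J hJ x, sum_PV J hJ x, sum_QQ J hJ x.1, ← norm_sq_eq]
  have hq1 : (‖x.1‖^2 : ℝ)^q = (‖x.1‖^2)^(q-1) * ‖x.1‖^2 := by
    rw [← Real.rpow_add_one hwne]; congr 1; ring
  have hu1 : uF x ^ e = uF x ^ (e-1) * uF x := by
    rw [← Real.rpow_add_one hune]; congr 1; ring
  have huex : uF x = ‖x.1‖^2*‖x.1‖^2 + 16*‖x.2‖^2 := by rw [uF]; ring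
  have hcoef : 8*q + 4*(m:ℝ) + 8*(k:ℝ) + 8 + 16*e = 0 := by
    have hp1 : p - 1 ≠ 0 := by intro h; apply (by linarith : p ≠ 1); linarith
    rw [he, hq, hα]
    field_simp
    ring
  rw [hq1, hu1, huex]
  linear_combination (KK * ((‖x.1‖^2)^(q-1)) * ((‖x.1‖^2*‖x.1‖^2 + 16*‖x.2‖^2)^(e-1))
    * (‖x.1‖^2)^2 * (‖x.1‖^2*‖x.1‖^2 + 16*‖x.2‖^2)) * hcoef

end CapAux

/-- for 1 < p < Q = m+2k and R > 0, the function
f = (R/N)^{(Q−p)/(p−1)} is Δ_{H,p}-harmonic away from {z = 0} and equals 1 on {N = R}. -/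
theorem capacitary_potential_gauge_ball
    (hm : 1 ≤ m) (hk : 1 ≤ k)
    (J : Fin k → Matrix (Fin m) (Fin m) ℝ) (hJ : HType J)
    (p R : ℝ) (hp : 1 < p) (hpQ : p < (m : ℝ) + 2 * k) (hR : 0 < R)
    (f : Pt m k → ℝ)
    (hf : ∀ x : Pt m k,
      f x = (R / gaugeN x) ^ (((m : ℝ) + 2 * k - p) / (p - 1))) :
    (∀ x : Pt m k, x.1 ≠ 0 → hPLap J p f x = 0) ∧
    (∀ x : Pt m k, gaugeN x = R → f x = 1) := by
  have hfeq : f = fun y => (R / gaugeN y) ^ (((m:ℝ) + 2*k - p)/(p-1)) := funext hf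
  constructor
  · intro x hx
    rw [hfeq]
    exact CapAux.hPLap_fE_zero J hJ p R hp hR hx
  · intro x hN
    rw [hf x, hN, div_self hR.ne', Real.one_rpow]

end
end

section
/- Let f(z,σ) = g(|z|²/4, σ) for a C² function g : ℝ × ℝ^k → ℝ. Then at every point (z,σ) with z ≠ 0 and ∇g(ξ,σ) ≠ 0, where ξ = |z|²/4, one has ( |∇_H f|² Δ_H f − Δ_{H,∞} f ) / |∇_H f|³ = (|z|/2) · [ (1/|∇g|) ( g_{ξξ} + ((m−1)/(2ξ)) g_ξ + Δ_σ g ) − Δ_∞ g / |∇g|³ ], where all quantities involving g are evaluated at (ξ,σ), ∇g = (g_ξ, ∇_σ g), and Δ_∞ g = (1/2)⟨∇(|∇g|²), ∇g⟩. (The left-hand side is the horizontal mean curvature of the level set of f at the point, computed from the defining function f.) -/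
open scoped BigOperators
open Matrix

noncomputable section

variable {m k : ℕ}

----------------------------------------------------------------
-- derivative toolkit
----------------------------------------------------------------

def Dphi (y : Pt m k) : Pt m k →L[ℝ] ℝ × EuclideanSpace ℝ (Fin k) :=
  (((1:ℝ)/2) • ((innerSL ℝ y.1).comp (ContinuousLinearMap.fst ℝ _ _))).prod
    (ContinuousLinearMap.snd ℝ _ _)

lemma hasFDerivAt_phi (y : Pt m k) :
    HasFDerivAt (fun p : Pt m k => ((‖p.1‖^2/4 : ℝ), p.2)) (Dphi y) y := by
  have h1 : HasFDerivAt (fun p : Pt m k => ‖p.1‖^2)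
      (2 • (innerSL ℝ y.1).comp (ContinuousLinearMap.fst ℝ _ _)) y :=
    (hasFDerivAt_fst).norm_sq
  have h2 := HasFDerivAt.prodMk (h1.const_mul ((1:ℝ)/4)) hasFDerivAt_snd
  convert h2 using 2
  · rfl
  · rfl
  · rfl
  · simp only [Prod.mk.injEq, and_true]; ring
  · ext v <;> simp [Dphi] <;> ring

lemma Dphi_eval1 (y : Pt m k) (i : Fin m) :
    Dphi y (EuclideanSpace.single i 1, 0) = (y.1 i / 2, 0) := by
  simp [Dphi, EuclideanSpace.inner_single_right]
  ring

lemma Dphi_eval2 (y : Pt m k) (ℓ : Fin k) :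
    Dphi y (0, EuclideanSpace.single ℓ 1) = ((0:ℝ), EuclideanSpace.single ℓ 1) := by
  simp [Dphi]

lemma clm_eval_c0 (T : (ℝ × EuclideanSpace ℝ (Fin k)) →L[ℝ] ℝ) (c : ℝ) :
    T (c, 0) = c * T (1, 0) := by
  rw [show ((c, (0:EuclideanSpace ℝ (Fin k))) : ℝ × EuclideanSpace ℝ (Fin k))
      = c • ((1:ℝ), (0:EuclideanSpace ℝ (Fin k))) by simp,
    _root_.map_smul, smul_eq_mul]

lemma hasFDerivAt_coord (y : Pt m k) (j : Fin m) :
    HasFDerivAt (fun p : Pt m k => p.1 j)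
      ((EuclideanSpace.proj j).comp (ContinuousLinearMap.fst ℝ _ _)) y := by
  have h := ((EuclideanSpace.proj (𝕜 := ℝ) j).comp
    (ContinuousLinearMap.fst ℝ (EuclideanSpace ℝ (Fin m)) (EuclideanSpace ℝ (Fin k)))).hasFDerivAt
    (x := y)
  exact h

lemma contDiff_gXi {g : ℝ × EuclideanSpace ℝ (Fin k) → ℝ} (hg : ContDiff ℝ 2 g) :
    ContDiff ℝ 1 (gXi g) := by
  have h1 : ContDiff ℝ 1 (fderiv ℝ g) := hg.fderiv_right (by norm_num)
  exact (ContinuousLinearMap.apply ℝ ℝ ((1:ℝ), (0:EuclideanSpace ℝ (Fin k)))).contDiff.comp h1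

lemma contDiff_gS {g : ℝ × EuclideanSpace ℝ (Fin k) → ℝ} (hg : ContDiff ℝ 2 g) (ℓ : Fin k) :
    ContDiff ℝ 1 (gS g ℓ) := by
  have h1 : ContDiff ℝ 1 (fderiv ℝ g) := hg.fderiv_right (by norm_num)
  exact (ContinuousLinearMap.apply ℝ ℝ ((0:ℝ), EuclideanSpace.single ℓ (1:ℝ))).contDiff.comp h1

lemma contDiff_gGradSq {g : ℝ × EuclideanSpace ℝ (Fin k) → ℝ} (hg : ContDiff ℝ 2 g) :
    ContDiff ℝ 1 (gGradSq g) := by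
  unfold gGradSq
  exact ((contDiff_gXi hg).pow 2).add (ContDiff.sum fun ℓ _ => (contDiff_gS hg ℓ).pow 2)

lemma norm_sq_coords (z : EuclideanSpace ℝ (Fin m)) : ‖z‖^2 = ∑ j : Fin m, (z j)^2 := by
  rw [EuclideanSpace.norm_eq, Real.sq_sqrt (by positivity)]
  exact Finset.sum_congr rfl fun j _ => by rw [Real.norm_eq_abs, sq_abs]

----------------------------------------------------------------
-- first horizontal derivative of f(z,σ)=g(|z|²/4,σ)
----------------------------------------------------------------

lemma XD_partial {g : ℝ × EuclideanSpace ℝ (Fin k) → ℝ} (hg : ContDiff ℝ 2 g)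
    (J : Fin k → Matrix (Fin m) (Fin m) ℝ) (i : Fin m) (y : Pt m k) :
    XD J (fun p : Pt m k => g (‖p.1‖^2/4, p.2)) i y
      = (1/2) * (y.1 i * gXi g (‖y.1‖^2/4, y.2))
        + (1/2) * ∑ ℓ : Fin k, (∑ j : Fin m, J ℓ i j * y.1 j) * gS g ℓ (‖y.1‖^2/4, y.2) := by
  have hgd : DifferentiableAt ℝ g (‖y.1‖^2/4, y.2) :=
    (hg.differentiable (by norm_num)).differentiableAt
  have hc : HasFDerivAt (fun p : Pt m k => g (‖p.1‖^2/4, p.2))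
      ((fderiv ℝ g (‖y.1‖^2/4, y.2)).comp (Dphi y)) y :=
    hgd.hasFDerivAt.comp y (hasFDerivAt_phi y)
  unfold XD
  rw [hc.fderiv]
  simp only [ContinuousLinearMap.comp_apply, Dphi_eval1, Dphi_eval2]
  rw [clm_eval_c0]
  unfold gXi gS
  ring

lemma skew_apply {J : Matrix (Fin m) (Fin m) ℝ} (h : Jᵀ = -J) (i j : Fin m) :
    J j i = -J i j := by
  have := congrFun (congrFun h i) j
  simpa [Matrix.transpose_apply, Matrix.neg_apply] using this

lemma trace_zero {J : Matrix (Fin m) (Fin m) ℝ} (h : Jᵀ = -J) :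
    ∑ i : Fin m, J i i = 0 := by
  have : ∀ i : Fin m, J i i = 0 := fun i => by
    have := skew_apply h i i; linarith
  simp [this]

lemma sum_z_Jz {J : Matrix (Fin m) (Fin m) ℝ} (h : Jᵀ = -J) (z : Fin m → ℝ) :
    ∑ i : Fin m, z i * (∑ j : Fin m, J i j * z j) = 0 := by
  have e1 : ∑ i : Fin m, z i * (∑ j : Fin m, J i j * z j)
      = ∑ i : Fin m, ∑ j : Fin m, z i * J i j * z j := by
    refine Finset.sum_congr rfl fun i _ => ?_
    rw [Finset.mul_sum]; refine Finset.sum_congr rfl fun j _ => by ring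
  have e2 : ∑ i : Fin m, ∑ j : Fin m, z i * J i j * z j
      = ∑ j : Fin m, ∑ i : Fin m, z i * J i j * z j := Finset.sum_comm
  have e3 : (∑ j : Fin m, ∑ i : Fin m, z i * J i j * z j)
      = ∑ i : Fin m, ∑ j : Fin m, -(z i * J i j * z j) := by
    refine Finset.sum_congr rfl fun i _ => Finset.sum_congr rfl fun j _ => ?_
    rw [skew_apply h]; ring
  have e4 : (∑ i : Fin m, ∑ j : Fin m, -(z i * J i j * z j))
      = -∑ i : Fin m, ∑ j : Fin m, z i * J i j * z j := by
    simp [Finset.sum_neg_distrib]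
  have := e1.trans (e2.trans (e3.trans e4))
  rw [e1]; linarith [this]

lemma sum_Jz_Jz_aux {A B : Matrix (Fin m) (Fin m) ℝ} (hA : Aᵀ = -A) (z : Fin m → ℝ) :
    ∑ i : Fin m, (∑ j : Fin m, A i j * z j) * (∑ j : Fin m, B i j * z j)
      = -∑ j : Fin m, ∑ j' : Fin m, z j * z j' * (A * B) j j' := by
  have e1 : ∀ i : Fin m, (∑ j : Fin m, A i j * z j) * (∑ j : Fin m, B i j * z j)
      = ∑ j : Fin m, ∑ j' : Fin m, (A i j * z j) * (B i j' * z j') := fun i =>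
    Finset.sum_mul_sum _ _ _ _
  calc ∑ i : Fin m, (∑ j : Fin m, A i j * z j) * (∑ j : Fin m, B i j * z j)
      = ∑ i : Fin m, ∑ j : Fin m, ∑ j' : Fin m, (A i j * z j) * (B i j' * z j') := by
        exact Finset.sum_congr rfl fun i _ => e1 i
    _ = ∑ j : Fin m, ∑ j' : Fin m, ∑ i : Fin m, (A i j * z j) * (B i j' * z j') := by
        rw [Finset.sum_comm]
        exact Finset.sum_congr rfl fun j _ => Finset.sum_comm
    _ = ∑ j : Fin m, ∑ j' : Fin m, z j * z j' * ∑ i : Fin m, (-(A j i)) * B i j' := by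
        refine Finset.sum_congr rfl fun j _ => Finset.sum_congr rfl fun j' _ => ?_
        rw [Finset.mul_sum]
        refine Finset.sum_congr rfl fun i _ => ?_
        rw [show A i j = -A j i by rw [skew_apply hA]]
        ring
    _ = -∑ j : Fin m, ∑ j' : Fin m, z j * z j' * (A * B) j j' := by
        rw [← Finset.sum_neg_distrib]
        refine Finset.sum_congr rfl fun j _ => ?_
        rw [← Finset.sum_neg_distrib]
        refine Finset.sum_congr rfl fun j' _ => ?_
        rw [Matrix.mul_apply]
        rw [show (∑ i : Fin m, (-(A j i)) * B i j') = -∑ i : Fin m, A j i * B i j' by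
          rw [← Finset.sum_neg_distrib]; exact Finset.sum_congr rfl fun i _ => by ring]
        ring

lemma sum_Jz_Jz {J : Fin k → Matrix (Fin m) (Fin m) ℝ} (hJ : HType J) (z : Fin m → ℝ)
    (ℓ ℓ' : Fin k) :
    ∑ i : Fin m, (∑ j : Fin m, J ℓ i j * z j) * (∑ j : Fin m, J ℓ' i j * z j)
      = if ℓ = ℓ' then ∑ j : Fin m, (z j)^2 else 0 := by
  have h1 := sum_Jz_Jz_aux (hJ.1 ℓ) z (B := J ℓ')
  have h2 := sum_Jz_Jz_aux (hJ.1 ℓ') z (B := J ℓ)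
  have hsw : ∑ i : Fin m, (∑ j : Fin m, J ℓ i j * z j) * (∑ j : Fin m, J ℓ' i j * z j)
      = ∑ i : Fin m, (∑ j : Fin m, J ℓ' i j * z j) * (∑ j : Fin m, J ℓ i j * z j) :=
    Finset.sum_congr rfl fun i _ => mul_comm _ _
  have hC := hJ.2 ℓ ℓ'
  have hkey : ∑ j : Fin m, ∑ j' : Fin m, z j * z j' * ((J ℓ * J ℓ') j j' + (J ℓ' * J ℓ) j j')
      = (if ℓ = ℓ' then (-2:ℝ) else 0) * ∑ j : Fin m, (z j)^2 := by
    have hent : ∀ j j' : Fin m, (J ℓ * J ℓ') j j' + (J ℓ' * J ℓ) j j'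
        = (if ℓ = ℓ' then (-2:ℝ) else 0) * (if j = j' then (1:ℝ) else 0) := by
      intro j j'
      have := congrFun (congrFun hC j) j'
      simpa [Matrix.add_apply, Matrix.smul_apply, Matrix.one_apply, smul_eq_mul] using this
    calc ∑ j : Fin m, ∑ j' : Fin m, z j * z j' * ((J ℓ * J ℓ') j j' + (J ℓ' * J ℓ) j j')
        = ∑ j : Fin m, ∑ j' : Fin m,
            z j * z j' * ((if ℓ = ℓ' then (-2:ℝ) else 0) * (if j = j' then (1:ℝ) else 0)) := by
          exact Finset.sum_congr rfl fun j _ => Finset.sum_congr rfl fun j' _ => by rw [hent]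
      _ = ∑ j : Fin m, (if ℓ = ℓ' then (-2:ℝ) else 0) * (z j)^2 := by
          refine Finset.sum_congr rfl fun j _ => ?_
          rw [Finset.sum_eq_single j]
          · simp; ring
          · intro b _ hb; simp [Ne.symm hb]
          · intro hb; exact absurd (Finset.mem_univ j) hb
      _ = (if ℓ = ℓ' then (-2:ℝ) else 0) * ∑ j : Fin m, (z j)^2 := by rw [Finset.mul_sum]
  have hsum : (∑ j : Fin m, ∑ j' : Fin m, z j * z j' * ((J ℓ * J ℓ') j j' + (J ℓ' * J ℓ) j j'))
      = (∑ j : Fin m, ∑ j' : Fin m, z j * z j' * (J ℓ * J ℓ') j j')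
        + ∑ j : Fin m, ∑ j' : Fin m, z j * z j' * (J ℓ' * J ℓ) j j' := by
    rw [← Finset.sum_add_distrib]
    refine Finset.sum_congr rfl fun j _ => ?_
    rw [← Finset.sum_add_distrib]
    exact Finset.sum_congr rfl fun j' _ => by ring
  by_cases h : ℓ = ℓ'
  · simp only [h, if_true] at hkey ⊢
    subst h
    linarith [h1, h2, hkey, hsum]
  · simp only [h, if_false] at hkey ⊢
    linarith [h1, h2, hkey, hsum, hsw]

/-- dot product of two "partial-symmetry-shaped" horizontal vectors -/
lemma dotH {J : Fin k → Matrix (Fin m) (Fin m) ℝ} (hJ : HType J) (z : Fin m → ℝ)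
    (A A' : ℝ) (B B' : Fin k → ℝ) :
    ∑ i : Fin m, ((1/2) * (z i * A) + (1/2) * ∑ ℓ : Fin k, (∑ j : Fin m, J ℓ i j * z j) * B ℓ)
        * ((1/2) * (z i * A') + (1/2) * ∑ ℓ : Fin k, (∑ j : Fin m, J ℓ i j * z j) * B' ℓ)
      = ((∑ j : Fin m, (z j)^2)/4) * (A * A' + ∑ ℓ : Fin k, B ℓ * B' ℓ) := by
  set b : Fin k → Fin m → ℝ := fun ℓ i => ∑ j : Fin m, J ℓ i j * z j with hb
  have hzb : ∀ ℓ, ∑ i : Fin m, z i * b ℓ i = 0 := fun ℓ => sum_z_Jz (hJ.1 ℓ) z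
  have hbb : ∀ ℓ ℓ', ∑ i : Fin m, b ℓ i * b ℓ' i
      = if ℓ = ℓ' then ∑ j : Fin m, (z j)^2 else 0 := fun ℓ ℓ' => sum_Jz_Jz hJ z ℓ ℓ'
  have expand : ∀ i : Fin m,
      ((1/2) * (z i * A) + (1/2) * ∑ ℓ : Fin k, b ℓ i * B ℓ)
        * ((1/2) * (z i * A') + (1/2) * ∑ ℓ : Fin k, b ℓ i * B' ℓ)
      = (A*A'/4) * (z i)^2
        + ∑ ℓ : Fin k, (A'/4 * B ℓ) * (z i * b ℓ i)
        + ∑ ℓ : Fin k, (A/4 * B' ℓ) * (z i * b ℓ i)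
        + (1/4) * ∑ ℓ : Fin k, ∑ ℓ' : Fin k, (B ℓ * B' ℓ') * (b ℓ i * b ℓ' i) := by
    intro i
    have e1 : (∑ ℓ : Fin k, b ℓ i * B ℓ) * (∑ ℓ : Fin k, b ℓ i * B' ℓ)
        = ∑ ℓ : Fin k, ∑ ℓ' : Fin k, (b ℓ i * B ℓ) * (b ℓ' i * B' ℓ') :=
      Finset.sum_mul_sum _ _ _ _
    have e2 : (∑ ℓ : Fin k, ∑ ℓ' : Fin k, (b ℓ i * B ℓ) * (b ℓ' i * B' ℓ'))
        = ∑ ℓ : Fin k, ∑ ℓ' : Fin k, (B ℓ * B' ℓ') * (b ℓ i * b ℓ' i) :=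
      Finset.sum_congr rfl fun ℓ _ => Finset.sum_congr rfl fun ℓ' _ => by ring
    have e3 : (z i * A) * ∑ ℓ : Fin k, b ℓ i * B' ℓ
        = ∑ ℓ : Fin k, (A * B' ℓ) * (z i * b ℓ i) := by
      rw [Finset.mul_sum]; exact Finset.sum_congr rfl fun ℓ _ => by ring
    have e4 : (z i * A') * ∑ ℓ : Fin k, b ℓ i * B ℓ
        = ∑ ℓ : Fin k, (A' * B ℓ) * (z i * b ℓ i) := by
      rw [Finset.mul_sum]; exact Finset.sum_congr rfl fun ℓ _ => by ring
    calc ((1/2) * (z i * A) + (1/2) * ∑ ℓ : Fin k, b ℓ i * B ℓ)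
          * ((1/2) * (z i * A') + (1/2) * ∑ ℓ : Fin k, b ℓ i * B' ℓ)
        = (A*A'/4) * (z i)^2
          + (1/4) * ((z i * A') * ∑ ℓ : Fin k, b ℓ i * B ℓ)
          + (1/4) * ((z i * A) * ∑ ℓ : Fin k, b ℓ i * B' ℓ)
          + (1/4) * ((∑ ℓ : Fin k, b ℓ i * B ℓ) * (∑ ℓ : Fin k, b ℓ i * B' ℓ)) := by ring
      _ = (A*A'/4) * (z i)^2
          + ∑ ℓ : Fin k, (A'/4 * B ℓ) * (z i * b ℓ i)
          + ∑ ℓ : Fin k, (A/4 * B' ℓ) * (z i * b ℓ i)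
          + (1/4) * ∑ ℓ : Fin k, ∑ ℓ' : Fin k, (B ℓ * B' ℓ') * (b ℓ i * b ℓ' i) := by
          rw [e1, e2, e3, e4]
          rw [show (1/4:ℝ) * ∑ ℓ : Fin k, A' * B ℓ * (z i * b ℓ i)
              = ∑ ℓ : Fin k, A'/4 * B ℓ * (z i * b ℓ i) by
            rw [Finset.mul_sum]; exact Finset.sum_congr rfl fun ℓ _ => by ring]
          rw [show (1/4:ℝ) * ∑ ℓ : Fin k, A * B' ℓ * (z i * b ℓ i)
              = ∑ ℓ : Fin k, A/4 * B' ℓ * (z i * b ℓ i) by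
            rw [Finset.mul_sum]; exact Finset.sum_congr rfl fun ℓ _ => by ring]
  rw [Finset.sum_congr rfl fun i _ => expand i]
  rw [Finset.sum_add_distrib, Finset.sum_add_distrib, Finset.sum_add_distrib]
  have t1 : ∑ i : Fin m, (A*A'/4) * (z i)^2 = (A*A'/4) * ∑ j : Fin m, (z j)^2 := by
    rw [Finset.mul_sum]
  have t2 : ∑ i : Fin m, ∑ ℓ : Fin k, (A'/4 * B ℓ) * (z i * b ℓ i) = 0 := by
    rw [Finset.sum_comm]
    refine Finset.sum_eq_zero fun ℓ _ => ?_
    rw [← Finset.mul_sum, hzb ℓ, mul_zero]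
  have t3 : ∑ i : Fin m, ∑ ℓ : Fin k, (A/4 * B' ℓ) * (z i * b ℓ i) = 0 := by
    rw [Finset.sum_comm]
    refine Finset.sum_eq_zero fun ℓ _ => ?_
    rw [← Finset.mul_sum, hzb ℓ, mul_zero]
  have t4 : ∑ i : Fin m, (1/4) * ∑ ℓ : Fin k, ∑ ℓ' : Fin k, (B ℓ * B' ℓ') * (b ℓ i * b ℓ' i)
      = ((∑ j : Fin m, (z j)^2)/4) * ∑ ℓ : Fin k, B ℓ * B' ℓ := by
    have swap : ∑ i : Fin m, ∑ ℓ : Fin k, ∑ ℓ' : Fin k, (B ℓ * B' ℓ') * (b ℓ i * b ℓ' i)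
        = ∑ ℓ : Fin k, ∑ ℓ' : Fin k, (B ℓ * B' ℓ') * ∑ i : Fin m, b ℓ i * b ℓ' i := by
      rw [Finset.sum_comm]
      refine Finset.sum_congr rfl fun ℓ _ => ?_
      rw [Finset.sum_comm]
      refine Finset.sum_congr rfl fun ℓ' _ => ?_
      rw [← Finset.mul_sum]
    rw [← Finset.mul_sum, swap]
    have : ∑ ℓ : Fin k, ∑ ℓ' : Fin k, (B ℓ * B' ℓ') * ∑ i : Fin m, b ℓ i * b ℓ' i
        = (∑ j : Fin m, (z j)^2) * ∑ ℓ : Fin k, B ℓ * B' ℓ := by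
      rw [Finset.mul_sum]
      refine Finset.sum_congr rfl fun ℓ _ => ?_
      rw [Finset.sum_eq_single ℓ]
      · rw [hbb ℓ ℓ]; simp; ring
      · intro ℓ' _ hne
        rw [hbb ℓ ℓ']; simp [Ne.symm hne]
      · intro hb'; exact absurd (Finset.mem_univ ℓ) hb'
    rw [this]; ring
  rw [t1, t2, t3, t4]; ring

lemma lapH {J : Fin k → Matrix (Fin m) (Fin m) ℝ} (hJ : HType J) (z : Fin m → ℝ)
    (A P : ℝ) (B Q M : Fin k → ℝ) (H : Fin k → Fin k → ℝ) :
    ∑ i : Fin m,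
      (((1/2) * (z i * ((z i / 2) * P) + A)
        + (1/2) * ∑ ℓ : Fin k,
            ((∑ j : Fin m, J ℓ i j * z j) * ((z i / 2) * Q ℓ) + B ℓ * J ℓ i i))
       + (1/2) * ∑ ℓ' : Fin k, (∑ j : Fin m, J ℓ' i j * z j) *
           ((1/2) * (z i * M ℓ')
             + (1/2) * ∑ ℓ : Fin k, (∑ j : Fin m, J ℓ i j * z j) * H ℓ ℓ'))
    = (m : ℝ) * A / 2 + ((∑ j : Fin m, (z j)^2)/4) * P
        + ((∑ j : Fin m, (z j)^2)/4) * ∑ ℓ : Fin k, H ℓ ℓ := by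
  set b : Fin k → Fin m → ℝ := fun ℓ i => ∑ j : Fin m, J ℓ i j * z j with hb
  have hzb : ∀ ℓ, ∑ i : Fin m, z i * b ℓ i = 0 := fun ℓ => sum_z_Jz (hJ.1 ℓ) z
  have hbb : ∀ ℓ ℓ', ∑ i : Fin m, b ℓ i * b ℓ' i
      = if ℓ = ℓ' then ∑ j : Fin m, (z j)^2 else 0 := fun ℓ ℓ' => sum_Jz_Jz hJ z ℓ ℓ'
  rw [Finset.sum_add_distrib, Finset.sum_add_distrib]
  have p1 : ∑ i : Fin m, (1/2) * (z i * ((z i / 2) * P) + A)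
      = ((∑ j : Fin m, (z j)^2)/4) * P + (m : ℝ) * A / 2 := by
    have : ∀ i : Fin m, (1/2) * (z i * ((z i / 2) * P) + A)
        = (P/4) * (z i)^2 + A/2 := fun i => by ring
    rw [Finset.sum_congr rfl fun i _ => this i, Finset.sum_add_distrib,
      ← Finset.mul_sum, Finset.sum_const, Finset.card_univ]
    simp [Fintype.card_fin]
    ring
  have p2 : ∑ i : Fin m, (1/2) * ∑ ℓ : Fin k, (b ℓ i * ((z i / 2) * Q ℓ) + B ℓ * J ℓ i i)
      = 0 := by
    have inner : ∀ i : Fin m, (1/2) * ∑ ℓ : Fin k, (b ℓ i * ((z i / 2) * Q ℓ) + B ℓ * J ℓ i i)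
        = ∑ ℓ : Fin k, ((Q ℓ/4) * (z i * b ℓ i) + (B ℓ/2) * J ℓ i i) := fun i => by
      rw [Finset.mul_sum]; exact Finset.sum_congr rfl fun ℓ _ => by ring
    rw [Finset.sum_congr rfl fun i _ => inner i, Finset.sum_comm]
    refine Finset.sum_eq_zero fun ℓ _ => ?_
    rw [Finset.sum_add_distrib, ← Finset.mul_sum, ← Finset.mul_sum, hzb ℓ, trace_zero (hJ.1 ℓ)]
    ring
  have p3 : ∑ i : Fin m, (1/2) * ∑ ℓ' : Fin k, b ℓ' i *
        ((1/2) * (z i * M ℓ') + (1/2) * ∑ ℓ : Fin k, b ℓ i * H ℓ ℓ')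
      = ((∑ j : Fin m, (z j)^2)/4) * ∑ ℓ : Fin k, H ℓ ℓ := by
    have inner : ∀ i : Fin m, (1/2) * ∑ ℓ' : Fin k, b ℓ' i *
          ((1/2) * (z i * M ℓ') + (1/2) * ∑ ℓ : Fin k, b ℓ i * H ℓ ℓ')
        = ∑ ℓ' : Fin k, ((M ℓ'/4) * (z i * b ℓ' i)
            + ∑ ℓ : Fin k, (H ℓ ℓ'/4) * (b ℓ i * b ℓ' i)) := fun i => by
      rw [Finset.mul_sum]
      refine Finset.sum_congr rfl fun ℓ' _ => ?_
      have : b ℓ' i * ((1/2) * (z i * M ℓ') + (1/2) * ∑ ℓ : Fin k, b ℓ i * H ℓ ℓ')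
          = (M ℓ'/4) * (z i * b ℓ' i) * 2 + (1/2) * (b ℓ' i * ∑ ℓ : Fin k, b ℓ i * H ℓ ℓ') := by
        ring
      rw [show (1/2:ℝ) * (b ℓ' i * ((1/2) * (z i * M ℓ')
            + (1/2) * ∑ ℓ : Fin k, b ℓ i * H ℓ ℓ'))
          = (M ℓ'/4) * (z i * b ℓ' i)
            + (1/4) * (b ℓ' i * ∑ ℓ : Fin k, b ℓ i * H ℓ ℓ') by ring]
      congr 1
      rw [Finset.mul_sum, Finset.mul_sum]
      exact Finset.sum_congr rfl fun ℓ _ => by ring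
    rw [Finset.sum_congr rfl fun i _ => inner i, Finset.sum_comm]
    have term : ∀ ℓ' : Fin k,
        ∑ i : Fin m, ((M ℓ'/4) * (z i * b ℓ' i)
            + ∑ ℓ : Fin k, (H ℓ ℓ'/4) * (b ℓ i * b ℓ' i))
        = ((∑ j : Fin m, (z j)^2)/4) * H ℓ' ℓ' := by
      intro ℓ'
      rw [Finset.sum_add_distrib, ← Finset.mul_sum, hzb ℓ', mul_zero, zero_add,
        Finset.sum_comm]
      have : ∀ ℓ : Fin k, ∑ i : Fin m, (H ℓ ℓ'/4) * (b ℓ i * b ℓ' i)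
          = (H ℓ ℓ'/4) * (if ℓ = ℓ' then ∑ j : Fin m, (z j)^2 else 0) := fun ℓ => by
        rw [← Finset.mul_sum, hbb ℓ ℓ']
      rw [Finset.sum_congr rfl fun ℓ _ => this ℓ, Finset.sum_eq_single ℓ']
      · simp; ring
      · intro ℓ _ hne; simp [hne]
      · intro hb'; exact absurd (Finset.mem_univ ℓ') hb'
    rw [Finset.sum_congr rfl fun ℓ' _ => term ℓ', ← Finset.mul_sum]
  rw [p1, p2, p3]; ring


lemma hGradSq_partial {g : ℝ × EuclideanSpace ℝ (Fin k) → ℝ} (hg : ContDiff ℝ 2 g)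
    {J : Fin k → Matrix (Fin m) (Fin m) ℝ} (hJ : HType J) (y : Pt m k) :
    hGradSq J (fun p : Pt m k => g (‖p.1‖^2/4, p.2)) y
      = (‖y.1‖^2/4) * gGradSq g (‖y.1‖^2/4, y.2) := by
  unfold hGradSq
  calc ∑ i : Fin m, (XD J (fun p : Pt m k => g (‖p.1‖^2/4, p.2)) i y)^2
      = ∑ i : Fin m,
          ((1/2) * (y.1 i * gXi g (‖y.1‖^2/4, y.2))
            + (1/2) * ∑ ℓ : Fin k, (∑ j : Fin m, J ℓ i j * y.1 j) * gS g ℓ (‖y.1‖^2/4, y.2))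
          * ((1/2) * (y.1 i * gXi g (‖y.1‖^2/4, y.2))
            + (1/2) * ∑ ℓ : Fin k, (∑ j : Fin m, J ℓ i j * y.1 j) * gS g ℓ (‖y.1‖^2/4, y.2)) := by
        refine Finset.sum_congr rfl fun i _ => ?_
        rw [XD_partial hg J i y]; ring
    _ = ((∑ j : Fin m, (y.1 j)^2)/4)
          * (gXi g (‖y.1‖^2/4, y.2) * gXi g (‖y.1‖^2/4, y.2)
            + ∑ ℓ : Fin k, gS g ℓ (‖y.1‖^2/4, y.2) * gS g ℓ (‖y.1‖^2/4, y.2)) :=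
        dotH hJ y.1 _ _ _ _
    _ = (‖y.1‖^2/4) * gGradSq g (‖y.1‖^2/4, y.2) := by
        rw [← norm_sq_coords]
        unfold gGradSq
        rw [show (∑ ℓ : Fin k, gS g ℓ (‖y.1‖^2/4, y.2) * gS g ℓ (‖y.1‖^2/4, y.2))
            = ∑ ℓ : Fin k, (gS g ℓ (‖y.1‖^2/4, y.2))^2 from
          Finset.sum_congr rfl fun ℓ _ => (sq _).symm]
        ring

----------------------------------------------------------------
-- the function F_i = X_i f in explicit form, and its derivative
----------------------------------------------------------------

def Fi (g : ℝ × EuclideanSpace ℝ (Fin k) → ℝ) (J : Fin k → Matrix (Fin m) (Fin m) ℝ)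
    (i : Fin m) : Pt m k → ℝ := fun y =>
  (1/2) * (y.1 i * gXi g (‖y.1‖^2/4, y.2))
    + (1/2) * ∑ ℓ : Fin k, (∑ j : Fin m, J ℓ i j * y.1 j) * gS g ℓ (‖y.1‖^2/4, y.2)

lemma XD_eq_Fi {g : ℝ × EuclideanSpace ℝ (Fin k) → ℝ} (hg : ContDiff ℝ 2 g)
    (J : Fin k → Matrix (Fin m) (Fin m) ℝ) (i : Fin m) :
    XD J (fun p : Pt m k => g (‖p.1‖^2/4, p.2)) i = Fi g J i :=
  funext fun y => XD_partial hg J i y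

def DFi (g : ℝ × EuclideanSpace ℝ (Fin k) → ℝ) (J : Fin k → Matrix (Fin m) (Fin m) ℝ)
    (i : Fin m) (x : Pt m k) : Pt m k →L[ℝ] ℝ :=
  ((1:ℝ)/2) • (x.1 i • ((fderiv ℝ (gXi g) (‖x.1‖^2/4, x.2)).comp (Dphi x))
      + gXi g (‖x.1‖^2/4, x.2) •
          ((EuclideanSpace.proj i).comp (ContinuousLinearMap.fst ℝ _ _)))
  + ((1:ℝ)/2) • ∑ ℓ : Fin k,
      ((∑ j : Fin m, J ℓ i j * x.1 j) • ((fderiv ℝ (gS g ℓ) (‖x.1‖^2/4, x.2)).comp (Dphi x))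
        + gS g ℓ (‖x.1‖^2/4, x.2) •
            ∑ j : Fin m, (J ℓ i j) •
              ((EuclideanSpace.proj j).comp
                (ContinuousLinearMap.fst ℝ (EuclideanSpace ℝ (Fin m)) (EuclideanSpace ℝ (Fin k)))))

lemma hasFDerivAt_Fi {g : ℝ × EuclideanSpace ℝ (Fin k) → ℝ} (hg : ContDiff ℝ 2 g)
    (J : Fin k → Matrix (Fin m) (Fin m) ℝ) (i : Fin m) (x : Pt m k) :
    HasFDerivAt (Fi g J i) (DFi g J i x) x := by
  have hAφ : HasFDerivAt (fun p : Pt m k => gXi g (‖p.1‖^2/4, p.2))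
      ((fderiv ℝ (gXi g) (‖x.1‖^2/4, x.2)).comp (Dphi x)) x :=
    (((contDiff_gXi hg).differentiable one_ne_zero).differentiableAt).hasFDerivAt.comp x
      (hasFDerivAt_phi x)
  have hBφ : ∀ ℓ : Fin k, HasFDerivAt (fun p : Pt m k => gS g ℓ (‖p.1‖^2/4, p.2))
      ((fderiv ℝ (gS g ℓ) (‖x.1‖^2/4, x.2)).comp (Dphi x)) x := fun ℓ =>
    (((contDiff_gS hg ℓ).differentiable one_ne_zero).differentiableAt).hasFDerivAt.comp x
      (hasFDerivAt_phi x)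
  have hbf : ∀ ℓ : Fin k, HasFDerivAt (fun y : Pt m k => ∑ j : Fin m, J ℓ i j * y.1 j)
      (∑ j : Fin m, (J ℓ i j) •
        ((EuclideanSpace.proj j).comp
          (ContinuousLinearMap.fst ℝ (EuclideanSpace ℝ (Fin m)) (EuclideanSpace ℝ (Fin k))))) x :=
    fun ℓ => HasFDerivAt.fun_sum fun j _ => (hasFDerivAt_coord x j).const_mul (J ℓ i j)
  exact (((hasFDerivAt_coord x i).mul hAφ).const_mul ((1:ℝ)/2)).add
    ((HasFDerivAt.fun_sum fun ℓ _ => (hbf ℓ).mul (hBφ ℓ)).const_mul ((1:ℝ)/2))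

lemma clm_eval_half (T : (ℝ × EuclideanSpace ℝ (Fin k)) →L[ℝ] ℝ) (c : ℝ) :
    T (c / 2, 0) = c / 2 * T (1, 0) := clm_eval_c0 T (c/2)

lemma Fi_eval1 {g : ℝ × EuclideanSpace ℝ (Fin k) → ℝ} (hg : ContDiff ℝ 2 g)
    (J : Fin k → Matrix (Fin m) (Fin m) ℝ) (i : Fin m) (x : Pt m k) :
    fderiv ℝ (Fi g J i) x (EuclideanSpace.single i 1, 0)
      = (1/2) * (x.1 i * ((x.1 i / 2) * fderiv ℝ (gXi g) (‖x.1‖^2/4, x.2) (1, 0))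
            + gXi g (‖x.1‖^2/4, x.2))
        + (1/2) * ∑ ℓ : Fin k,
            ((∑ j : Fin m, J ℓ i j * x.1 j)
                * ((x.1 i / 2) * fderiv ℝ (gS g ℓ) (‖x.1‖^2/4, x.2) (1, 0))
              + gS g ℓ (‖x.1‖^2/4, x.2) * J ℓ i i) := by
  rw [(hasFDerivAt_Fi hg J i x).fderiv]
  unfold DFi
  simp only [ContinuousLinearMap.add_apply, ContinuousLinearMap.coe_smul',
    Pi.smul_apply, ContinuousLinearMap.coe_sum', Finset.sum_apply,
    ContinuousLinearMap.comp_apply, ContinuousLinearMap.coe_fst',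
    Dphi_eval1, clm_eval_half, smul_eq_mul, PiLp.proj_apply,
    EuclideanSpace.single_apply, mul_ite, mul_one, mul_zero,
    Finset.sum_ite_eq', Finset.mem_univ, if_true]

lemma Fi_eval2 {g : ℝ × EuclideanSpace ℝ (Fin k) → ℝ} (hg : ContDiff ℝ 2 g)
    (J : Fin k → Matrix (Fin m) (Fin m) ℝ) (i : Fin m) (x : Pt m k) (ℓ' : Fin k) :
    fderiv ℝ (Fi g J i) x (0, EuclideanSpace.single ℓ' 1)
      = (1/2) * (x.1 i * fderiv ℝ (gXi g) (‖x.1‖^2/4, x.2) (0, EuclideanSpace.single ℓ' 1))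
        + (1/2) * ∑ ℓ : Fin k,
            (∑ j : Fin m, J ℓ i j * x.1 j)
              * fderiv ℝ (gS g ℓ) (‖x.1‖^2/4, x.2) (0, EuclideanSpace.single ℓ' 1) := by
  rw [(hasFDerivAt_Fi hg J i x).fderiv]
  unfold DFi
  simp only [ContinuousLinearMap.add_apply, ContinuousLinearMap.coe_smul',
    Pi.smul_apply, ContinuousLinearMap.coe_sum', Finset.sum_apply,
    ContinuousLinearMap.comp_apply, ContinuousLinearMap.coe_fst',
    Dphi_eval2, smul_eq_mul, PiLp.proj_apply, mul_zero, add_zero, mul_one]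
  simp

----------------------------------------------------------------
-- |∇_H f|² as explicit function and its horizontal derivatives
----------------------------------------------------------------

def qG (g : ℝ × EuclideanSpace ℝ (Fin k) → ℝ) : Pt m k → ℝ := fun y =>
  (‖y.1‖^2/4) * gGradSq g (‖y.1‖^2/4, y.2)

lemma hGradSq_eq_qG {g : ℝ × EuclideanSpace ℝ (Fin k) → ℝ} (hg : ContDiff ℝ 2 g)
    {J : Fin k → Matrix (Fin m) (Fin m) ℝ} (hJ : HType J) :
    hGradSq J (fun p : Pt m k => g (‖p.1‖^2/4, p.2)) = qG g :=
  funext fun y => hGradSq_partial hg hJ y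

def DqG (g : ℝ × EuclideanSpace ℝ (Fin k) → ℝ) (x : Pt m k) : Pt m k →L[ℝ] ℝ :=
  (‖x.1‖^2/4) • ((fderiv ℝ (gGradSq g) (‖x.1‖^2/4, x.2)).comp (Dphi x))
    + gGradSq g (‖x.1‖^2/4, x.2) •
        (ContinuousLinearMap.fst ℝ ℝ (EuclideanSpace ℝ (Fin k))).comp (Dphi x)

lemma hasFDerivAt_qG {g : ℝ × EuclideanSpace ℝ (Fin k) → ℝ} (hg : ContDiff ℝ 2 g)
    (x : Pt m k) : HasFDerivAt (qG g) (DqG g x) x := by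
  have hq : HasFDerivAt (fun p : Pt m k => ‖p.1‖^2/4)
      ((ContinuousLinearMap.fst ℝ ℝ (EuclideanSpace ℝ (Fin k))).comp (Dphi x)) x :=
    (hasFDerivAt_phi x).fst
  have hGφ : HasFDerivAt (fun p : Pt m k => gGradSq g (‖p.1‖^2/4, p.2))
      ((fderiv ℝ (gGradSq g) (‖x.1‖^2/4, x.2)).comp (Dphi x)) x :=
    (((contDiff_gGradSq hg).differentiable one_ne_zero).differentiableAt).hasFDerivAt.comp x
      (hasFDerivAt_phi x)
  exact hq.mul hGφ

lemma qG_eval1 {g : ℝ × EuclideanSpace ℝ (Fin k) → ℝ} (hg : ContDiff ℝ 2 g)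
    (x : Pt m k) (i : Fin m) :
    fderiv ℝ (qG g) x (EuclideanSpace.single i 1, 0)
      = (‖x.1‖^2/4) * ((x.1 i / 2) * fderiv ℝ (gGradSq g) (‖x.1‖^2/4, x.2) (1, 0))
        + gGradSq g (‖x.1‖^2/4, x.2) * (x.1 i / 2) := by
  rw [(hasFDerivAt_qG hg x).fderiv]
  unfold DqG
  simp only [ContinuousLinearMap.add_apply, ContinuousLinearMap.coe_smul',
    Pi.smul_apply, ContinuousLinearMap.comp_apply, ContinuousLinearMap.coe_fst',
    Dphi_eval1, clm_eval_half, smul_eq_mul, mul_one]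

lemma qG_eval2 {g : ℝ × EuclideanSpace ℝ (Fin k) → ℝ} (hg : ContDiff ℝ 2 g)
    (x : Pt m k) (ℓ : Fin k) :
    fderiv ℝ (qG g) x (0, EuclideanSpace.single ℓ 1)
      = (‖x.1‖^2/4) * fderiv ℝ (gGradSq g) (‖x.1‖^2/4, x.2) (0, EuclideanSpace.single ℓ 1) := by
  rw [(hasFDerivAt_qG hg x).fderiv]
  unfold DqG
  simp only [ContinuousLinearMap.add_apply, ContinuousLinearMap.coe_smul',
    Pi.smul_apply, ContinuousLinearMap.comp_apply, ContinuousLinearMap.coe_fst',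
    Dphi_eval2, smul_eq_mul, mul_zero, add_zero]


/-- horizontal mean curvature of a level set of a function with partial
symmetry f(z,σ) = g(|z|²/4, σ): at points with z ≠ 0 and ∇g ≠ 0, with ξ = |z|²/4,
( |∇_H f|² Δ_H f − Δ_{H,∞} f ) / |∇_H f|³
  = (|z|/2)·[ (1/|∇g|)(g_{ξξ} + ((m−1)/(2ξ))g_ξ + Δ_σ g) − Δ_∞ g/|∇g|³ ]. -/
theorem horizontal_mean_curvature_partial_symmetry
    (hm : 1 ≤ m) (hk : 1 ≤ k)
    (J : Fin k → Matrix (Fin m) (Fin m) ℝ) (hJ : HType J)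
    (g : ℝ × EuclideanSpace ℝ (Fin k) → ℝ) (hg : ContDiff ℝ 2 g)
    (f : Pt m k → ℝ) (hf : ∀ x : Pt m k, f x = g (‖x.1‖ ^ 2 / 4, x.2))
    (x : Pt m k) (hz : x.1 ≠ 0)
    (hgrad : gGradSq g (‖x.1‖ ^ 2 / 4, x.2) ≠ 0) :
    (hGradSq J f x * hLap J f x - hInfLap J f x) / (hGradNorm J f x) ^ 3 =
      (‖x.1‖ / 2) *
        ((1 / Real.sqrt (gGradSq g (‖x.1‖ ^ 2 / 4, x.2))) *
            (gXiXi g (‖x.1‖ ^ 2 / 4, x.2)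
              + (((m : ℝ) - 1) / (2 * (‖x.1‖ ^ 2 / 4))) * gXi g (‖x.1‖ ^ 2 / 4, x.2)
              + gLapS g (‖x.1‖ ^ 2 / 4, x.2))
          - gInf g (‖x.1‖ ^ 2 / 4, x.2) /
              (Real.sqrt (gGradSq g (‖x.1‖ ^ 2 / 4, x.2))) ^ 3) := by

  have hfe : f = fun p : Pt m k => g (‖p.1‖^2/4, p.2) := funext hf
  subst hfe
  have hxd := XD_eq_Fi hg J
  have hgsfun := hGradSq_eq_qG hg hJ (m := m)
  -- the horizontal Laplacian
  have hlap : hLap J (fun p : Pt m k => g (‖p.1‖^2/4, p.2)) x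
      = (m : ℝ) * gXi g (‖x.1‖^2/4, x.2) / 2
        + ((∑ j : Fin m, (x.1 j)^2)/4) * fderiv ℝ (gXi g) (‖x.1‖^2/4, x.2) (1, 0)
        + ((∑ j : Fin m, (x.1 j)^2)/4) *
            ∑ ℓ : Fin k, fderiv ℝ (gS g ℓ) (‖x.1‖^2/4, x.2) (0, EuclideanSpace.single ℓ 1) := by
    unfold hLap
    simp only [hxd]
    calc ∑ i : Fin m, XD J (Fi g J i) i x
        = ∑ i : Fin m,
            (((1/2) * (x.1 i * ((x.1 i / 2) * fderiv ℝ (gXi g) (‖x.1‖^2/4, x.2) (1, 0))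
                + gXi g (‖x.1‖^2/4, x.2))
              + (1/2) * ∑ ℓ : Fin k,
                  ((∑ j : Fin m, J ℓ i j * x.1 j)
                      * ((x.1 i / 2) * fderiv ℝ (gS g ℓ) (‖x.1‖^2/4, x.2) (1, 0))
                    + gS g ℓ (‖x.1‖^2/4, x.2) * J ℓ i i))
             + (1/2) * ∑ ℓ' : Fin k, (∑ j : Fin m, J ℓ' i j * x.1 j) *
                 ((1/2) * (x.1 i *
                     fderiv ℝ (gXi g) (‖x.1‖^2/4, x.2) (0, EuclideanSpace.single ℓ' 1))
                   + (1/2) * ∑ ℓ : Fin k, (∑ j : Fin m, J ℓ i j * x.1 j) *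
                       fderiv ℝ (gS g ℓ) (‖x.1‖^2/4, x.2) (0, EuclideanSpace.single ℓ' 1))) := by
          refine Finset.sum_congr rfl fun i _ => ?_
          unfold XD
          rw [Fi_eval1 hg J i x]
          rw [show (∑ ℓ' : Fin k, (∑ j : Fin m, J ℓ' i j * x.1 j) *
                fderiv ℝ (Fi g J i) x (0, EuclideanSpace.single ℓ' 1))
              = ∑ ℓ' : Fin k, (∑ j : Fin m, J ℓ' i j * x.1 j) *
                 ((1/2) * (x.1 i *
                     fderiv ℝ (gXi g) (‖x.1‖^2/4, x.2) (0, EuclideanSpace.single ℓ' 1))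
                   + (1/2) * ∑ ℓ : Fin k, (∑ j : Fin m, J ℓ i j * x.1 j) *
                       fderiv ℝ (gS g ℓ) (‖x.1‖^2/4, x.2) (0, EuclideanSpace.single ℓ' 1)) from
            Finset.sum_congr rfl fun ℓ' _ => by rw [Fi_eval2 hg J i x ℓ']]
      _ = (m : ℝ) * gXi g (‖x.1‖^2/4, x.2) / 2
            + ((∑ j : Fin m, (x.1 j)^2)/4) * fderiv ℝ (gXi g) (‖x.1‖^2/4, x.2) (1, 0)
            + ((∑ j : Fin m, (x.1 j)^2)/4) *
                ∑ ℓ : Fin k, fderiv ℝ (gS g ℓ) (‖x.1‖^2/4, x.2)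
                  (0, EuclideanSpace.single ℓ 1) :=
          lapH hJ x.1 _ _ _ _ _ _
  -- the horizontal infinity Laplacian
  have hxdg : ∀ i : Fin m, XD J (qG g) i x
      = (1/2) * (x.1 i * (gGradSq g (‖x.1‖^2/4, x.2)
            + (‖x.1‖^2/4) * fderiv ℝ (gGradSq g) (‖x.1‖^2/4, x.2) (1, 0)))
        + (1/2) * ∑ ℓ : Fin k, (∑ j : Fin m, J ℓ i j * x.1 j) *
            ((‖x.1‖^2/4) * fderiv ℝ (gGradSq g) (‖x.1‖^2/4, x.2)
              (0, EuclideanSpace.single ℓ 1)) := by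
    intro i
    unfold XD
    rw [qG_eval1 hg x i]
    rw [show (∑ ℓ : Fin k, (∑ j : Fin m, J ℓ i j * x.1 j) *
          fderiv ℝ (qG g) x (0, EuclideanSpace.single ℓ 1))
        = ∑ ℓ : Fin k, (∑ j : Fin m, J ℓ i j * x.1 j) *
            ((‖x.1‖^2/4) * fderiv ℝ (gGradSq g) (‖x.1‖^2/4, x.2)
              (0, EuclideanSpace.single ℓ 1)) from
      Finset.sum_congr rfl fun ℓ _ => by rw [qG_eval2 hg x ℓ]]
    ring
  have hinf : hInfLap J (fun p : Pt m k => g (‖p.1‖^2/4, p.2)) x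
      = (1/2) * (((∑ j : Fin m, (x.1 j)^2)/4) *
          ((gGradSq g (‖x.1‖^2/4, x.2)
              + (‖x.1‖^2/4) * fderiv ℝ (gGradSq g) (‖x.1‖^2/4, x.2) (1, 0))
            * gXi g (‖x.1‖^2/4, x.2)
          + ∑ ℓ : Fin k, ((‖x.1‖^2/4) * fderiv ℝ (gGradSq g) (‖x.1‖^2/4, x.2)
              (0, EuclideanSpace.single ℓ 1)) * gS g ℓ (‖x.1‖^2/4, x.2))) := by
    unfold hInfLap
    rw [hgsfun]
    congr 1
    calc ∑ i : Fin m, XD J (qG g) i x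
          * XD J (fun p : Pt m k => g (‖p.1‖^2/4, p.2)) i x
        = ∑ i : Fin m,
            (((1/2) * (x.1 i * (gGradSq g (‖x.1‖^2/4, x.2)
                  + (‖x.1‖^2/4) * fderiv ℝ (gGradSq g) (‖x.1‖^2/4, x.2) (1, 0)))
              + (1/2) * ∑ ℓ : Fin k, (∑ j : Fin m, J ℓ i j * x.1 j) *
                  ((‖x.1‖^2/4) * fderiv ℝ (gGradSq g) (‖x.1‖^2/4, x.2)
                    (0, EuclideanSpace.single ℓ 1)))
            * ((1/2) * (x.1 i * gXi g (‖x.1‖^2/4, x.2))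
              + (1/2) * ∑ ℓ : Fin k, (∑ j : Fin m, J ℓ i j * x.1 j) *
                  gS g ℓ (‖x.1‖^2/4, x.2))) := by
          refine Finset.sum_congr rfl fun i _ => ?_
          rw [hxdg i, XD_partial hg J i x]
      _ = ((∑ j : Fin m, (x.1 j)^2)/4) *
          ((gGradSq g (‖x.1‖^2/4, x.2)
              + (‖x.1‖^2/4) * fderiv ℝ (gGradSq g) (‖x.1‖^2/4, x.2) (1, 0))
            * gXi g (‖x.1‖^2/4, x.2)
          + ∑ ℓ : Fin k, ((‖x.1‖^2/4) * fderiv ℝ (gGradSq g) (‖x.1‖^2/4, x.2)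
              (0, EuclideanSpace.single ℓ 1)) * gS g ℓ (‖x.1‖^2/4, x.2)) :=
          dotH hJ x.1 _ _ _ _
  -- value of |∇_H f|²
  have hgseq : hGradSq J (fun p : Pt m k => g (‖p.1‖^2/4, p.2)) x
      = (‖x.1‖^2/4) * gGradSq g (‖x.1‖^2/4, x.2) := hGradSq_partial hg hJ x
  -- final algebra
  have hGy : (0:ℝ) < gGradSq g (‖x.1‖^2/4, x.2) := by
    rcases lt_or_eq_of_le (show (0:ℝ) ≤ gGradSq g (‖x.1‖^2/4, x.2) by
      unfold gGradSq; positivity) with h | h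
    · exact h
    · exact absurd h.symm hgrad
  have hr : (0:ℝ) < ‖x.1‖ := norm_pos_iff.mpr hz
  rw [hgseq, hlap, hinf]
  unfold hGradNorm
  rw [hgseq]
  unfold gXiXi gLapS gInf
  rw [← norm_sq_coords x.1]
  rw [show (∑ ℓ : Fin k, ((‖x.1‖^2/4) * fderiv ℝ (gGradSq g) (‖x.1‖^2/4, x.2)
        (0, EuclideanSpace.single ℓ 1)) * gS g ℓ (‖x.1‖^2/4, x.2))
      = (‖x.1‖^2/4) * ∑ ℓ : Fin k, fderiv ℝ (gGradSq g) (‖x.1‖^2/4, x.2)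
        (0, EuclideanSpace.single ℓ 1) * gS g ℓ (‖x.1‖^2/4, x.2) by
    rw [Finset.mul_sum]; exact Finset.sum_congr rfl fun ℓ _ => by ring]
  rw [show Real.sqrt ((‖x.1‖^2/4) * gGradSq g (‖x.1‖^2/4, x.2))
      = (‖x.1‖/2) * Real.sqrt (gGradSq g (‖x.1‖^2/4, x.2)) by
    rw [show (‖x.1‖^2/4 : ℝ) = (‖x.1‖/2)^2 by ring, Real.sqrt_mul (sq_nonneg _),
      Real.sqrt_sq (by positivity)]]
  set r := ‖x.1‖ with hrdef
  set t := Real.sqrt (gGradSq g (r^2/4, x.2)) with htdef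
  have ht : (0:ℝ) < t := Real.sqrt_pos.mpr hGy
  have ht2 : t^2 = gGradSq g (r^2/4, x.2) := Real.sq_sqrt hGy.le
  rw [← ht2]
  set A := gXi g (r^2/4, x.2)
  set P := fderiv ℝ (gXi g) (r^2/4, x.2) (1, 0)
  set L := ∑ ℓ : Fin k, fderiv ℝ (gS g ℓ) (r^2/4, x.2) (0, EuclideanSpace.single ℓ 1)
  set Gx := fderiv ℝ (gGradSq g) (r^2/4, x.2) (1, 0)
  set SG := ∑ ℓ : Fin k, fderiv ℝ (gGradSq g) (r^2/4, x.2)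
      (0, EuclideanSpace.single ℓ 1) * gS g ℓ (r^2/4, x.2)
  have hr0 : r ≠ 0 := ne_of_gt hr
  have ht0 : t ≠ 0 := ne_of_gt ht
  field_simp
  ring


end
end

section
/- Let S : ℍ → ℍ be an ℝ-linear map. Then the following are equivalent: (a) S is an isometry (|S q| = |q| for all q ∈ ℍ) and S commutes with right multiplication by each of i, j, k, i.e. S(q·ω) = S(q)·ω for all q ∈ ℍ and ω ∈ {i, j, k}; (b) there exists a quaternion u with |u| = 1 such that S(q) = u·q for all q ∈ ℍ. Consequently, for any two unit quaternions q, p there exists an ℝ-linear isometry S of ℍ commuting with right multiplication by every purely imaginary quaternion such that S(q) = p. -/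
open scoped Quaternion

/-- an ℝ-linear map S : ℍ → ℍ is an isometry commuting with right
multiplication by i, j, k iff S is left multiplication by a unit quaternion; consequently,
for any two unit quaternions q, p there is an ℝ-linear isometry of ℍ commuting with right
multiplication by every purely imaginary quaternion and sending q to p. -/
theorem quaternion_J_invariant_isometries
    (S : ℍ[ℝ] →ₗ[ℝ] ℍ[ℝ]) :
    (((∀ q : ℍ[ℝ], ‖S q‖ = ‖q‖) ∧
        (∀ q : ℍ[ℝ], ∀ ω ∈ ({⟨0,1,0,0⟩, ⟨0,0,1,0⟩, ⟨0,0,0,1⟩} : Set ℍ[ℝ]),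
          S (q * ω) = S q * ω)) ↔
      (∃ u : ℍ[ℝ], ‖u‖ = 1 ∧ ∀ q : ℍ[ℝ], S q = u * q)) ∧
    (∀ q p : ℍ[ℝ], ‖q‖ = 1 → ‖p‖ = 1 →
      ∃ T : ℍ[ℝ] →ₗ[ℝ] ℍ[ℝ],
        (∀ x : ℍ[ℝ], ‖T x‖ = ‖x‖) ∧
        (∀ (x ω : ℍ[ℝ]), ω.re = 0 → T (x * ω) = T x * ω) ∧
        T q = p) := by
  constructor
  · constructor
    · rintro ⟨hiso, hcomm⟩
      refine ⟨S 1, by simpa using hiso 1, fun q => ?_⟩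
      have hI := hcomm 1 ⟨0,1,0,0⟩ (Set.mem_insert _ _)
      have hJ := hcomm 1 ⟨0,0,1,0⟩ (Set.mem_insert_of_mem _ (Set.mem_insert _ _))
      have hK := hcomm 1 ⟨0,0,0,1⟩ (Set.mem_insert_of_mem _ (Set.mem_insert_of_mem _ rfl))
      replace hI : S (⟨0,1,0,0⟩ : ℍ[ℝ]) = S 1 * ⟨0,1,0,0⟩ := (congrArg S (one_mul _)).symm.trans hI
      replace hJ : S (⟨0,0,1,0⟩ : ℍ[ℝ]) = S 1 * ⟨0,0,1,0⟩ := (congrArg S (one_mul _)).symm.trans hJ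
      replace hK : S (⟨0,0,0,1⟩ : ℍ[ℝ]) = S 1 * ⟨0,0,0,1⟩ := (congrArg S (one_mul _)).symm.trans hK
      have hq : q = q.re • 1 + q.imI • ⟨0,1,0,0⟩ + q.imJ • ⟨0,0,1,0⟩
          + q.imK • ⟨0,0,0,1⟩ := by
        ext <;> simp
        · erw [Quaternion.re_smul, Quaternion.re_smul, Quaternion.re_smul]; simp
        · erw [Quaternion.imI_smul, Quaternion.imI_smul, Quaternion.imI_smul]; simp
        · erw [Quaternion.imJ_smul, Quaternion.imJ_smul, Quaternion.imJ_smul]; simp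
        · erw [Quaternion.imK_smul, Quaternion.imK_smul, Quaternion.imK_smul]; simp
      conv_lhs => rw [hq]
      conv_rhs => rw [hq]
      simp only [map_add, map_smul, hI, hJ, hK, mul_add, mul_smul_comm, mul_one]
      erw [map_smul, hI, mul_smul_comm, map_smul, hJ, mul_smul_comm, map_smul, hK, mul_smul_comm]
    · rintro ⟨u, hu, hS⟩
      refine ⟨fun q => by rw [hS, norm_mul, hu, one_mul], fun q ω _ => by
        rw [hS, hS, mul_assoc]⟩
  · intro q p hq hp
    refine ⟨LinearMap.mulLeft ℝ (p * star q), fun x => ?_, fun x ω _ => ?_, ?_⟩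
    · simp [norm_mul, hq, hp]
    · simp [mul_assoc]
    · have : star q * q = 1 := by
        have := Quaternion.star_mul_self q
        rw [this]
        have : Quaternion.normSq q = 1 := by
          rw [Quaternion.normSq_eq_norm_mul_self, hq, one_mul]
        rw [this]; simp
      simp [LinearMap.mulLeft_apply, mul_assoc, this]
end
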